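/- For a row vector y ∈ ℝⁿ, let ω(y) be the supremum of v > 0 such that |y·q + p| < ‖q‖^{−v} for infinitely many q ∈ ℤⁿ and some p ∈ ℤ. Let u_y be the (n+1)×(n+1) unipotent matrix with first row (1, y) and lower right block I_n, and g_t = diag(e^t, e^{−t/n}, ..., e^{−t/n}). Define γ(y) to be the supremum of all c such that the lattice g_t u_y ℤ^{n+1} contains a nonzero vector of norm less than e^{−ct} for infinitely many t ∈ ℕ. Then ω(y) = n(1 + γ(y)) / (1 − n γ(y)) whenever γ(y) < 1/n. -/

import Mathlib

open Real ENNReal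

/-- Sup norm of an integer vector. -/
def snormZ {n : ℕ} (q : Fin n → ℤ) : ℝ :=
  ((Finset.univ.sup fun i => (q i).natAbs : ℕ) : ℝ)

/-- The Diophantine exponent `ω(y)` of a row vector `y ∈ ℝⁿ`: the supremum of `v > 0`
for which `|y·q + p| < ‖q‖^{−v}` for infinitely many `q ∈ ℤⁿ` and some `p ∈ ℤ`
(as an extended nonnegative real). -/
noncomputable def omegaExp {n : ℕ} (y : Fin n → ℝ) : ℝ≥0∞ :=
  sSup {e : ℝ≥0∞ | ∃ v : ℝ, e = ENNReal.ofReal v ∧ 0 < v ∧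
    {q : Fin n → ℤ | ∃ p : ℤ,
      |(∑ i, y i * q i) + (p : ℝ)| < (snormZ q) ^ (-v)}.Infinite}

/-- The Euclidean norm of the vector `g_t u_y (p, q)` in `ℝ^{n+1}`, where
`g_t = diag(e^t, e^{−t/n}, …, e^{−t/n})` and `u_y` is unipotent with first row `(1, y)`:
its first coordinate is `e^t (y·q + p)` and the remaining ones are `e^{−t/n} q_i`. -/
noncomputable def latticeVecNorm {n : ℕ} (t : ℝ) (y : Fin n → ℝ) (p : ℤ) (q : Fin n → ℤ) : ℝ :=
  Real.sqrt ((Real.exp t * ((∑ i, y i * q i) + (p : ℝ))) ^ 2 +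
    ∑ i, (Real.exp (-t / n) * (q i : ℝ)) ^ 2)

/-- The growth exponent `γ(y)`: the supremum of all `c` such that the lattice
`g_t u_y ℤ^{n+1}` contains a nonzero vector of norm less than `e^{−ct}` for
infinitely many `t ∈ ℕ`. -/
noncomputable def gammaExp {n : ℕ} (y : Fin n → ℝ) : ℝ≥0∞ :=
  sSup {e : ℝ≥0∞ | ∃ c : ℝ, e = ENNReal.ofReal c ∧
    {t : ℕ | ∃ (p : ℤ) (q : Fin n → ℤ), ¬(p = 0 ∧ q = 0) ∧
      latticeVecNorm (t : ℝ) y p q < Real.exp (-c * t)}.Infinite}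


lemma snormZ_nonneg {n : ℕ} (q : Fin n → ℤ) : 0 ≤ snormZ q := Nat.cast_nonneg _

lemma abs_le_snormZ {n : ℕ} (q : Fin n → ℤ) (i : Fin n) : |(q i : ℝ)| ≤ snormZ q := by
  rw [← Int.cast_abs, Int.abs_eq_natAbs]
  have := Finset.le_sup (f := fun i => (q i).natAbs) (Finset.mem_univ i)
  unfold snormZ
  exact_mod_cast this

lemma one_le_snormZ {n : ℕ} {q : Fin n → ℤ} (hq : q ≠ 0) : 1 ≤ snormZ q := by
  obtain ⟨i, hi⟩ : ∃ i, q i ≠ 0 := by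
    by_contra h; push_neg at h; exact hq (funext h)
  have h1 : 1 ≤ |(q i : ℝ)| := by
    rw [← Int.cast_abs]; exact_mod_cast Int.one_le_abs hi
  exact h1.trans (abs_le_snormZ q i)

lemma exists_abs_eq_snormZ {n : ℕ} {q : Fin n → ℤ} (hq : q ≠ 0) :
    ∃ i, |(q i : ℝ)| = snormZ q := by
  have hne : (Finset.univ : Finset (Fin n)).Nonempty := by
    by_contra hcon
    rw [Finset.not_nonempty_iff_eq_empty, Finset.univ_eq_empty_iff] at hcon
    exact hq (funext fun i => (hcon.false i).elim)
  obtain ⟨i, _, hi⟩ := Finset.exists_mem_eq_sup Finset.univ hne fun i => (q i).natAbs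
  refine ⟨i, ?_⟩
  rw [← Int.cast_abs, Int.abs_eq_natAbs, snormZ, hi]
  exact Int.cast_natCast _

lemma finite_snormZ_le {n : ℕ} (B : ℝ) : {q : Fin n → ℤ | snormZ q ≤ B}.Finite := by
  have : {q : Fin n → ℤ | snormZ q ≤ B} ⊆
      Set.pi Set.univ (fun _ : Fin n => Set.Icc (-⌈B⌉) ⌈B⌉) := by
    intro q hq i _
    have h1 : |(q i : ℝ)| ≤ B := (abs_le_snormZ q i).trans hq
    have h2 : |(q i : ℝ)| ≤ (⌈B⌉ : ℝ) := h1.trans (Int.le_ceil B)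
    have h3 : |q i| ≤ ⌈B⌉ := by
      rw [← Int.cast_abs] at h2; exact_mod_cast h2
    exact abs_le.mp h3
  exact Set.Finite.subset (Set.Finite.pi fun _ => Set.finite_Icc _ _) this

lemma unbounded_of_infinite {n : ℕ} {S : Set (Fin n → ℤ)} (h : S.Infinite) (B : ℝ) :
    ∃ q ∈ S, B < snormZ q := by
  by_contra hcon; push_neg at hcon
  exact h (Set.Finite.subset (finite_snormZ_le B) hcon)

lemma infinite_of_unbounded {n : ℕ} {S : Set (Fin n → ℤ)}
    (h : ∀ B : ℝ, ∃ q ∈ S, B < snormZ q) : S.Infinite := by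
  intro hfin
  have hb : BddAbove (snormZ '' S) := (hfin.image _).bddAbove
  obtain ⟨B, hB⟩ := hb
  obtain ⟨q, hq, hlt⟩ := h B
  exact absurd (hB (Set.mem_image_of_mem _ hq)) (not_le.mpr hlt)

lemma nat_infinite_of_unbounded {S : Set ℕ} (h : ∀ m : ℕ, ∃ t ∈ S, m ≤ t) : S.Infinite := by
  apply Set.infinite_of_not_bddAbove
  rintro ⟨b, hb⟩
  obtain ⟨t, ht, hle⟩ := h (b + 1)
  exact absurd (hb ht) (by omega)

lemma finite_pairs {n : ℕ} (y : Fin n → ℝ) (B : ℝ) :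
    {pq : (Fin n → ℤ) × ℤ | snormZ pq.1 ≤ B ∧
      |(∑ i, y i * pq.1 i) + (pq.2 : ℝ)| < 1}.Finite := by
  set M : ℝ := (∑ i, |y i|) * |B| + 1 with hM
  have hsub : {pq : (Fin n → ℤ) × ℤ | snormZ pq.1 ≤ B ∧
      |(∑ i, y i * pq.1 i) + (pq.2 : ℝ)| < 1} ⊆
      {q : Fin n → ℤ | snormZ q ≤ B} ×ˢ {p : ℤ | |(p : ℝ)| ≤ M} := by
    rintro ⟨q, p⟩ ⟨h1, h2⟩
    refine ⟨h1, ?_⟩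
    have hyq : |∑ i, y i * q i| ≤ (∑ i, |y i|) * |B| := by
      calc |∑ i, y i * q i| ≤ ∑ i, |y i * q i| := Finset.abs_sum_le_sum_abs _ _
        _ ≤ ∑ i, |y i| * |B| := by
            apply Finset.sum_le_sum
            intro i _
            rw [abs_mul]
            apply mul_le_mul_of_nonneg_left _ (abs_nonneg _)
            exact (abs_le_snormZ q i).trans (h1.trans (le_abs_self B))
        _ = (∑ i, |y i|) * |B| := by rw [← Finset.sum_mul]
    have : |(p : ℝ)| ≤ |∑ i, y i * q i| + 1 := by
      have h4 := abs_add_le ((∑ i, y i * q i) + (p : ℝ)) (-(∑ i, y i * q i))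
      have h5 : (∑ i, y i * q i) + (p : ℝ) + -(∑ i, y i * q i) = (p : ℝ) := by ring
      rw [h5, abs_neg] at h4
      linarith [le_of_lt h2]
    simp only [Set.mem_setOf_eq]
    linarith
  refine Set.Finite.subset (Set.Finite.prod (finite_snormZ_le B) ?_) hsub
  have : {p : ℤ | |(p : ℝ)| ≤ M} ⊆ Set.Icc (-⌈M⌉) ⌈M⌉ := by
    intro p hp
    have h2 : |(p : ℝ)| ≤ (⌈M⌉ : ℝ) := hp.trans (Int.le_ceil M)
    rw [← Int.cast_abs] at h2
    have h3 : |p| ≤ ⌈M⌉ := by exact_mod_cast h2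
    exact abs_le.mp h3
  exact Set.Finite.subset (Set.finite_Icc _ _) this

lemma gap_lemma {n : ℕ} {y : Fin n → ℝ}
    (hirr : ∀ q : Fin n → ℤ, q ≠ 0 → ∀ p : ℤ, (∑ i, y i * q i) + (p : ℝ) ≠ 0)
    (B : ℝ) :
    ∃ δ > 0, ∀ (q : Fin n → ℤ) (p : ℤ), q ≠ 0 → snormZ q ≤ B →
      |(∑ i, y i * q i) + (p : ℝ)| < 1 → δ ≤ |(∑ i, y i * q i) + (p : ℝ)| := by
  set S : Set ((Fin n → ℤ) × ℤ) := {pq | pq.1 ≠ 0 ∧ snormZ pq.1 ≤ B ∧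
      |(∑ i, y i * pq.1 i) + (pq.2 : ℝ)| < 1} with hS
  have hfin : S.Finite := Set.Finite.subset (finite_pairs y B) (fun pq hpq => ⟨hpq.2.1, hpq.2.2⟩)
  by_cases hne : S.Nonempty
  · obtain ⟨⟨q0, p0⟩, hmem, hmin⟩ := Set.exists_min_image S
      (fun pq => |(∑ i, y i * pq.1 i) + (pq.2 : ℝ)|) hfin hne
    refine ⟨|(∑ i, y i * q0 i) + (p0 : ℝ)|, ?_, ?_⟩
    · exact abs_pos.mpr (hirr q0 hmem.1 p0)
    · intro q p hq hB h1
      exact hmin ⟨q, p⟩ ⟨hq, hB, h1⟩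
  · refine ⟨1, one_pos, ?_⟩
    intro q p hq hB h1
    exact absurd ⟨⟨q, p⟩, hq, hB, h1⟩ hne

lemma dirichlet_step {n : ℕ} (hn : 0 < n) (y : Fin n → ℝ) (Q : ℕ) (hQ : 1 ≤ Q) :
    ∃ q : Fin n → ℤ, q ≠ 0 ∧ snormZ q ≤ Q ∧ ∃ p : ℤ,
      |(∑ i, y i * q i) + (p : ℝ)| < ((Q : ℝ) ^ n)⁻¹ := by
  have hQn : 0 < (Q : ℝ) ^ n := by positivity
  set s : (Fin n → Fin (Q + 1)) → ℝ := fun a => ∑ i, y i * ((a i : ℕ) : ℝ) with hs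
  set F : (Fin n → Fin (Q + 1)) → Fin (Q ^ n) := fun a =>
    ⟨(⌊((Q : ℝ) ^ n) * Int.fract (s a)⌋).toNat, by
      have h0 : (0:ℝ) ≤ ((Q : ℝ) ^ n) * Int.fract (s a) :=
        mul_nonneg hQn.le (Int.fract_nonneg _)
      have h1 : ((Q : ℝ) ^ n) * Int.fract (s a) < (Q : ℝ) ^ n := by
        have := Int.fract_lt_one (s a)
        nlinarith
      have h2 : ⌊((Q : ℝ) ^ n) * Int.fract (s a)⌋ < ((Q ^ n : ℕ) : ℤ) := by
        apply Int.floor_lt.mpr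
        push_cast
        exact h1
      exact (Int.toNat_lt' (pow_pos (by omega) _)).mpr h2⟩ with hF
  obtain ⟨a, b, hab, hFab⟩ := Fintype.exists_ne_map_eq_of_card_lt F (by
    simp only [Fintype.card_fun, Fintype.card_fin]
    exact Nat.pow_lt_pow_left (Nat.lt_succ_self Q) hn.ne')
  set q : Fin n → ℤ := fun i => ((a i : ℕ) : ℤ) - ((b i : ℕ) : ℤ) with hq
  have hsum : (∑ i, y i * q i) = s a - s b := by
    rw [hs, ← Finset.sum_sub_distrib]
    apply Finset.sum_congr rfl
    intro i _
    push_cast [hq]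
    ring
  refine ⟨q, ?_, ?_, ⟨⌊s b⌋ - ⌊s a⌋, ?_⟩⟩
  · intro h
    apply hab
    funext i
    have := congrFun h i
    simp only [hq, Pi.zero_apply, sub_eq_zero] at this
    exact Fin.ext (by exact_mod_cast this)
  · unfold snormZ
    have : (Finset.univ.sup fun i => (q i).natAbs) ≤ Q := by
      apply Finset.sup_le
      intro i _
      have ha' : (a i : ℕ) ≤ Q := Nat.lt_succ_iff.mp (a i).isLt
      have hb' : (b i : ℕ) ≤ Q := Nat.lt_succ_iff.mp (b i).isLt
      simp only [hq]
      omega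
    exact_mod_cast this
  · have hfr : (∑ i, y i * q i) + ((⌊s b⌋ - ⌊s a⌋ : ℤ) : ℝ) =
        Int.fract (s a) - Int.fract (s b) := by
      rw [hsum, Int.fract, Int.fract]
      push_cast
      ring
    rw [hfr]
    have hfloor : ⌊((Q : ℝ) ^ n) * Int.fract (s a)⌋ = ⌊((Q : ℝ) ^ n) * Int.fract (s b)⌋ := by
      have h0a : 0 ≤ ⌊((Q : ℝ) ^ n) * Int.fract (s a)⌋ :=
        Int.floor_nonneg.mpr (mul_nonneg hQn.le (Int.fract_nonneg _))
      have h0b : 0 ≤ ⌊((Q : ℝ) ^ n) * Int.fract (s b)⌋ :=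
        Int.floor_nonneg.mpr (mul_nonneg hQn.le (Int.fract_nonneg _))
      have := congrArg Fin.val hFab
      simp only [hF] at this
      omega
    have habs := Int.abs_sub_lt_one_of_floor_eq_floor hfloor
    rw [← mul_sub] at habs
    rw [abs_mul, abs_of_pos hQn] at habs
    rw [abs_sub_comm] at habs
    calc |Int.fract (s a) - Int.fract (s b)| 
        = ((Q:ℝ)^n)⁻¹ * ((Q:ℝ)^n * |Int.fract (s a) - Int.fract (s b)|) := by
          field_simp
      _ < ((Q:ℝ)^n)⁻¹ * 1 := by
          apply mul_lt_mul_of_pos_left _ (inv_pos.mpr hQn)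
          rw [abs_sub_comm]; exact habs
      _ = ((Q:ℝ)^n)⁻¹ := mul_one _

def QS {n : ℕ} (y : Fin n → ℝ) (v : ℝ) : Set (Fin n → ℤ) :=
  {q : Fin n → ℤ | ∃ p : ℤ, |(∑ i, y i * q i) + (p : ℝ)| < (snormZ q) ^ (-v)}

def TS {n : ℕ} (y : Fin n → ℝ) (c : ℝ) : Set ℕ :=
  {t : ℕ | ∃ (p : ℤ) (q : Fin n → ℤ), ¬(p = 0 ∧ q = 0) ∧
      latticeVecNorm (t : ℝ) y p q < Real.exp (-c * t)}

lemma le_omegaExp {n : ℕ} {y : Fin n → ℝ} {v : ℝ} (hv : 0 < v) (h : (QS y v).Infinite) :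
    ENNReal.ofReal v ≤ omegaExp y :=
  le_sSup ⟨v, rfl, hv, h⟩

lemma le_gammaExp {n : ℕ} {y : Fin n → ℝ} {c : ℝ} (h : (TS y c).Infinite) :
    ENNReal.ofReal c ≤ gammaExp y :=
  le_sSup ⟨c, rfl, h⟩

/-- rpow bound: for `1 ≤ N`, `N ≤ X` and `0 ≤ w`, `X⁻¹ᵛ ≤ N^{-v}` style. -/
lemma rpow_neg_le_of_le {N X v : ℝ} (hN : 0 < N) (hNX : N ≤ X) (hv : 0 ≤ v) :
    X ^ (-v) ≤ N ^ (-v) := by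
  rw [Real.rpow_neg (le_trans hN.le hNX), Real.rpow_neg hN.le]
  apply inv_anti₀ (Real.rpow_pos_of_pos hN v)
  exact Real.rpow_le_rpow hN.le hNX hv

lemma dirichlet_unbounded {n : ℕ} (hn : 0 < n) {y : Fin n → ℝ}
    (hirr : ∀ q : Fin n → ℤ, q ≠ 0 → ∀ p : ℤ, (∑ i, y i * q i) + (p : ℝ) ≠ 0) :
    ∀ B : ℝ, ∃ q ∈ QS y (n : ℝ), B < snormZ q := by
  intro B
  obtain ⟨δ, hδ, hgap⟩ := gap_lemma hirr (max B 0)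
  obtain ⟨Q, hQ⟩ := exists_nat_gt (max 1 δ⁻¹)
  have hQ1 : 1 ≤ Q := by
    have : (1:ℝ) < Q := lt_of_le_of_lt (le_max_left _ _) hQ
    exact_mod_cast this.le
  have hQR : (1:ℝ) ≤ Q := by exact_mod_cast hQ1
  have hQpow : (Q:ℝ) ≤ (Q:ℝ) ^ n := le_self_pow₀ hQR hn.ne'
  have hQninv : ((Q:ℝ) ^ n)⁻¹ < δ := by
    have h1 : δ⁻¹ < (Q:ℝ) := lt_of_le_of_lt (le_max_right _ _) hQ
    have h2 : δ⁻¹ < (Q:ℝ)^n := lt_of_lt_of_le h1 hQpow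
    have h3 : (0:ℝ) < (Q:ℝ)^n := by positivity
    exact (inv_lt_of_inv_lt₀ hδ h2 : ((Q:ℝ)^n)⁻¹ < δ)
  have hQninv1 : ((Q:ℝ) ^ n)⁻¹ ≤ 1 := by
    rw [inv_le_one_iff₀]
    right; linarith
  obtain ⟨q, hq0, hqQ, p, hp⟩ := dirichlet_step hn y Q hQ1
  have hN1 : 1 ≤ snormZ q := one_le_snormZ hq0
  have hmem : q ∈ QS y (n : ℝ) := by
    refine ⟨p, lt_of_lt_of_le hp ?_⟩
    have h1 : ((Q:ℝ)^n)⁻¹ = (Q:ℝ) ^ (-(n:ℝ)) := by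
      rw [Real.rpow_neg (by positivity), Real.rpow_natCast]
    rw [h1]
    exact rpow_neg_le_of_le (by linarith) hqQ (by positivity)
  refine ⟨q, hmem, ?_⟩
  by_contra hcon
  push_neg at hcon
  have hle : snormZ q ≤ max B 0 := le_trans hcon (le_max_left _ _)
  have h1 : |(∑ i, y i * q i) + (p : ℝ)| < 1 := lt_of_lt_of_le hp hQninv1
  have := hgap q p hq0 hle h1
  linarith [lt_of_lt_of_le (lt_of_le_of_lt this hp) hQninv.le]

lemma first_le_lvn {n : ℕ} (t : ℝ) (y : Fin n → ℝ) (p : ℤ) (q : Fin n → ℤ) :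
    Real.exp t * |(∑ i, y i * q i) + (p : ℝ)| ≤ latticeVecNorm t y p q := by
  rw [latticeVecNorm]
  have h1 : Real.exp t * |(∑ i, y i * q i) + (p : ℝ)| =
      Real.sqrt ((Real.exp t * ((∑ i, y i * q i) + (p : ℝ))) ^ 2) := by
    rw [Real.sqrt_sq_eq_abs, abs_mul, abs_of_pos (Real.exp_pos t)]
  rw [h1]
  apply Real.sqrt_le_sqrt
  have : 0 ≤ ∑ i, (Real.exp (-t / n) * (q i : ℝ)) ^ 2 :=
    Finset.sum_nonneg fun i _ => sq_nonneg _
  linarith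

lemma coord_le_lvn {n : ℕ} (t : ℝ) (y : Fin n → ℝ) (p : ℤ) (q : Fin n → ℤ) (i : Fin n) :
    Real.exp (-t / n) * |(q i : ℝ)| ≤ latticeVecNorm t y p q := by
  rw [latticeVecNorm]
  have h1 : Real.exp (-t / n) * |(q i : ℝ)| =
      Real.sqrt ((Real.exp (-t / n) * (q i : ℝ)) ^ 2) := by
    rw [Real.sqrt_sq_eq_abs, abs_mul, abs_of_pos (Real.exp_pos _)]
  rw [h1]
  apply Real.sqrt_le_sqrt
  have h2 : ∑ j, (Real.exp (-t / n) * (q j : ℝ)) ^ 2 =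
      (Real.exp (-t / n) * (q i : ℝ)) ^ 2 +
      ∑ j ∈ Finset.univ.erase i, (Real.exp (-t / n) * (q j : ℝ)) ^ 2 := by
    exact (Finset.add_sum_erase _ _ (Finset.mem_univ i)).symm
  have h3 : 0 ≤ ∑ j ∈ Finset.univ.erase i, (Real.exp (-t / n) * (q j : ℝ)) ^ 2 :=
    Finset.sum_nonneg fun j _ => sq_nonneg _
  nlinarith [sq_nonneg (Real.exp t * ((∑ i, y i * q i) + (p : ℝ)))]

lemma snorm_le_lvn {n : ℕ} (t : ℝ) (y : Fin n → ℝ) (p : ℤ) {q : Fin n → ℤ} (hq : q ≠ 0) :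
    Real.exp (-t / n) * snormZ q ≤ latticeVecNorm t y p q := by
  obtain ⟨i, hi⟩ := exists_abs_eq_snormZ hq
  rw [← hi]
  exact coord_le_lvn t y p q i

lemma lvn_qzero {n : ℕ} (t : ℝ) (y : Fin n → ℝ) (p : ℤ) :
    latticeVecNorm t y p 0 = Real.exp t * |(p : ℝ)| := by
  rw [latticeVecNorm]
  simp only [Pi.zero_apply, Int.cast_zero, mul_zero, zero_add,
    ne_eq, OfNat.ofNat_ne_zero, not_false_eq_true, zero_pow, Finset.sum_const_zero, add_zero]
  rw [Real.sqrt_sq_eq_abs, abs_mul, abs_of_pos (Real.exp_pos t)]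

lemma lvn_of_zero_sum {n : ℕ} (t : ℝ) (y : Fin n → ℝ) (p : ℤ) (q : Fin n → ℤ)
    (h : (∑ i, y i * q i) + (p : ℝ) = 0) :
    latticeVecNorm t y p q = Real.exp (-t / n) * Real.sqrt (∑ i, ((q i : ℝ)) ^ 2) := by
  rw [latticeVecNorm, h]
  simp only [mul_zero, ne_eq, OfNat.ofNat_ne_zero, not_false_eq_true, zero_pow, zero_add]
  rw [← Real.sqrt_sq (Real.exp_pos (-t/n)).le, ← Real.sqrt_mul (sq_nonneg _), Finset.mul_sum]
  rw [Real.sqrt_sq (Real.exp_pos (-t/n)).le]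
  congr 1
  apply Finset.sum_congr rfl
  intro i _
  ring

lemma hirr_of_gamma {n : ℕ} (hn : 0 < n) {y : Fin n → ℝ}
    (hγ : gammaExp y < ENNReal.ofReal (1 / n)) :
    ∀ q : Fin n → ℤ, q ≠ 0 → ∀ p : ℤ, (∑ i, y i * q i) + (p : ℝ) ≠ 0 := by
  intro q0 hq0 p0 hzero
  have hγtop : gammaExp y ≠ ⊤ := hγ.ne_top
  set γr := (gammaExp y).toReal with hγr
  have hγrlt : γr < 1 / n := (ENNReal.lt_ofReal_iff_toReal_lt hγtop).mp hγ
  have hγr0 : 0 ≤ γr := ENNReal.toReal_nonneg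
  have hnpos : (0:ℝ) < n := by exact_mod_cast hn
  set c := (γr + 1/n)/2 with hc
  have hc0 : 0 < c := by rw [hc]; positivity
  have hca : 0 < 1/(n:ℝ) - c := by rw [hc]; linarith
  have hTinf : (TS y c).Infinite := by
    apply nat_infinite_of_unbounded
    intro m
    set K := Real.sqrt (∑ i, ((q0 i : ℝ))^2) with hK
    have hK1 : 0 < K := by
      apply Real.sqrt_pos.mpr
      obtain ⟨i, hi⟩ : ∃ i, q0 i ≠ 0 := by
        by_contra h; push_neg at h; exact hq0 (funext h)
      have h1 : (0:ℝ) < ((q0 i : ℝ))^2 := by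
        have : (q0 i : ℝ) ≠ 0 := by exact_mod_cast hi
        positivity
      have h2 : ((q0 i : ℝ))^2 ≤ ∑ j, ((q0 j : ℝ))^2 := by
        apply Finset.single_le_sum (fun j _ => sq_nonneg ((q0 j : ℝ))) (Finset.mem_univ i)
      linarith
    set T := max m (⌈Real.log K / (1/(n:ℝ) - c)⌉₊ + 1) with hT
    refine ⟨T, ⟨p0, q0, fun h => hq0 h.2, ?_⟩, le_max_left _ _⟩
    rw [lvn_of_zero_sum _ _ _ _ hzero]
    have hTK : Real.log K < (1/(n:ℝ) - c) * T := by
      have h1 : Real.log K / (1/(n:ℝ) - c) ≤ (⌈Real.log K / (1/(n:ℝ) - c)⌉₊ : ℝ) :=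
        Nat.le_ceil _
      have h2 : (⌈Real.log K / (1/(n:ℝ) - c)⌉₊ + 1 : ℕ) ≤ T := le_max_right _ _
      have h3 : (⌈Real.log K / (1/(n:ℝ) - c)⌉₊ : ℝ) + 1 ≤ (T:ℝ) := by exact_mod_cast h2
      have h4 : Real.log K / (1/(n:ℝ) - c) < (T:ℝ) := by linarith
      calc Real.log K = (Real.log K / (1/(n:ℝ) - c)) * (1/(n:ℝ) - c) := by
            rw [div_mul_cancel₀ _ (ne_of_gt hca)]
        _ < (T:ℝ) * (1/(n:ℝ) - c) := by
            exact mul_lt_mul_of_pos_right h4 hca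
        _ = (1/(n:ℝ) - c) * T := by ring
    calc Real.exp (-(T:ℝ)/n) * K = Real.exp (-(T:ℝ)/n + Real.log K) := by
          rw [Real.exp_add, Real.exp_log hK1]
      _ < Real.exp (-c * T) := by
          apply Real.exp_lt_exp.mpr
          have : -(T:ℝ)/n + Real.log K < -(T:ℝ)/n + (1/(n:ℝ) - c) * T := by linarith
          calc -(T:ℝ)/n + Real.log K < -(T:ℝ)/n + (1/(n:ℝ) - c) * T := this
            _ = -c * T := by field_simp; ring
  have h1 := le_gammaExp hTinf
  have h2 : gammaExp y < ENNReal.ofReal c :=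
    (ENNReal.lt_ofReal_iff_toReal_lt hγtop).mpr (by rw [hc]; linarith)
  exact absurd h1 (not_le.mpr h2)

set_option maxHeartbeats 1000000 in
lemma TS_infinite_of_QS {n : ℕ} (hn : 0 < n) {y : Fin n → ℝ} {v c' : ℝ}
    (hvn : (n:ℝ) < v) (hc'0 : 0 < c') (hc' : c' < (v - n) / (n * (v + 1)))
    (hQ : (QS y v).Infinite) : (TS y c').Infinite := by
  have hnpos : (0:ℝ) < n := by exact_mod_cast hn
  have hn1 : (0:ℝ) < n + 1 := by linarith
  have hv1 : (0:ℝ) < v + 1 := by linarith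
  set α := n * (v + 1) / (n + 1) with hα
  set β := (v - n) / (n + 1) with hβ
  have hα0 : 0 < α := by rw [hα]; positivity
  have hβ0 : 0 < β := by rw [hβ]; apply div_pos <;> linarith
  have hkey : c' * α < β := by
    have h1 : c' * (n * (v + 1)) < v - n := (lt_div_iff₀ (by positivity)).mp hc'
    rw [hα, hβ, ← mul_div_assoc]
    exact (div_lt_div_iff_of_pos_right hn1).mpr h1
  have hd : 0 < β - c' * α := by linarith
  set C := Real.sqrt (Real.exp 1 ^ 2 + n) with hC
  have hC0 : 0 < C := Real.sqrt_pos.mpr (by positivity)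
  have hCsq : C ^ 2 = Real.exp 1 ^ 2 + n := Real.sq_sqrt (by positivity)
  apply nat_infinite_of_unbounded
  intro m
  set X := (Real.log C + c') / (β - c' * α) + 1 with hX
  set B := max (Real.exp (m / α)) (Real.exp X) with hB
  obtain ⟨q, ⟨p, hp⟩, hBq⟩ := unbounded_of_infinite hQ (max B 1)
  have hq0 : q ≠ 0 := by
    rintro rfl
    have h1 : snormZ (0 : Fin n → ℤ) = 0 := by
      unfold snormZ; simp
    rw [h1] at hBq
    have : (0:ℝ) < B := lt_of_lt_of_le (Real.exp_pos (m/α)) (le_max_left _ _)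
    exact absurd hBq (not_lt.mpr (le_max_of_le_right zero_le_one))
  set N := snormZ q with hN
  have hN1 : 1 < N := lt_of_le_of_lt (le_max_right B 1) hBq
  have hN0 : (0:ℝ) < N := by linarith
  set L := Real.log N with hL
  have hL0 : 0 < L := Real.log_pos hN1
  have hNexp : N = Real.exp L := (Real.exp_log hN0).symm
  have hNB : B < N := lt_of_le_of_lt (le_max_left B 1) hBq
  have hLm : m / α < L := by
    have h2 : Real.exp (m / α) < N := lt_of_le_of_lt (le_max_left _ _) hNB
    have h3 := Real.log_lt_log (Real.exp_pos _) h2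
    rwa [Real.log_exp] at h3
  have hLX : X < L := by
    have h2 : Real.exp X < N := lt_of_le_of_lt (le_max_right _ _) hNB
    have h3 := Real.log_lt_log (Real.exp_pos _) h2
    rwa [Real.log_exp] at h3
  set t := ⌈α * L⌉₊ with ht
  have htlo : α * L ≤ (t:ℝ) := Nat.le_ceil _
  have hthi : (t:ℝ) < α * L + 1 := Nat.ceil_lt_add_one (by positivity)
  have hm : m ≤ t := by
    have h1 : (m:ℝ) ≤ α * L := by
      have := (div_lt_iff₀' hα0).mp hLm
      linarith
    have h2 : (m:ℝ) ≤ (t:ℝ) := le_trans h1 htlo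
    exact_mod_cast h2
  refine ⟨t, ⟨p, q, fun h => hq0 h.2, ?_⟩, hm⟩
  have hrpow : (N:ℝ) ^ (-v) = Real.exp (-v * L) := by
    rw [Real.rpow_def_of_pos hN0, ← hL]
    ring_nf
  have hfirst : (Real.exp (t:ℝ) * ((∑ i, y i * q i) + (p : ℝ))) ^ 2 <
      (Real.exp 1 * Real.exp (-β * L)) ^ 2 := by
    have h1 : |Real.exp (t:ℝ) * ((∑ i, y i * q i) + (p : ℝ))| =
        Real.exp (t:ℝ) * |(∑ i, y i * q i) + (p : ℝ)| := by
      rw [abs_mul, abs_of_pos (Real.exp_pos _)]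
    have h2 : Real.exp (t:ℝ) * |(∑ i, y i * q i) + (p : ℝ)| <
        Real.exp (t:ℝ) * Real.exp (-v * L) := by
      apply mul_lt_mul_of_pos_left _ (Real.exp_pos _)
      rw [← hrpow]; exact hp
    have hαβ : α - v = -β := by
      rw [hα, hβ]; field_simp; ring
    have h3 : Real.exp (t:ℝ) * Real.exp (-v * L) ≤ Real.exp 1 * Real.exp (-β * L) := by
      rw [← Real.exp_add, ← Real.exp_add]
      apply Real.exp_le_exp.mpr
      nlinarith [hthi]
    calc (Real.exp (t:ℝ) * ((∑ i, y i * q i) + (p : ℝ))) ^ 2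
        = (Real.exp (t:ℝ) * |(∑ i, y i * q i) + (p : ℝ)|) ^ 2 := by
          rw [← h1, sq_abs]
      _ < (Real.exp 1 * Real.exp (-β * L)) ^ 2 := by
          apply pow_lt_pow_left₀ (lt_of_lt_of_le h2 h3) (by positivity) (by norm_num)
  have hcoord : ∀ i : Fin n, (Real.exp (-(t:ℝ) / n) * (q i : ℝ)) ^ 2 ≤
      Real.exp (-β * L) ^ 2 := by
    intro i
    have h2 : |(q i : ℝ)| ≤ N := abs_le_snormZ q i
    have h3 : Real.exp (-(t:ℝ) / n) ≤ Real.exp (-(α * L) / n) := by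
      apply Real.exp_le_exp.mpr
      exact (div_le_div_iff_of_pos_right hnpos).mpr (by linarith)
    have h4 : Real.exp (-(α * L) / n) * N = Real.exp (-β * L) := by
      rw [hNexp, ← Real.exp_add]
      congr 1
      rw [hα, hβ]
      field_simp
      ring
    have h5 : Real.exp (-(t:ℝ) / n) * |(q i : ℝ)| ≤ Real.exp (-β * L) := by
      rw [← h4]
      exact mul_le_mul h3 h2 (abs_nonneg _) (Real.exp_pos _).le
    calc (Real.exp (-(t:ℝ) / n) * (q i : ℝ)) ^ 2
        = (Real.exp (-(t:ℝ) / n) * |(q i : ℝ)|) ^ 2 := by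
          rw [mul_pow, mul_pow, sq_abs]
      _ ≤ Real.exp (-β * L) ^ 2 := by
          apply pow_le_pow_left₀ (by positivity) h5
  have hmain : C * Real.exp (-β * L) < Real.exp (-(c' * (α * L)) - c') := by
    rw [← Real.exp_log hC0, ← Real.exp_add]
    apply Real.exp_lt_exp.mpr
    have hdx : (β - c' * α) * ((Real.log C + c') / (β - c' * α)) = Real.log C + c' := by
      field_simp
    have hmul : (β - c' * α) * X < (β - c' * α) * L := mul_lt_mul_of_pos_left hLX hd
    rw [hX, mul_add, hdx, mul_one] at hmul
    nlinarith
  have hsecond : Real.exp (-(c' * (α * L)) - c') ≤ Real.exp (-c' * t) := by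
    apply Real.exp_le_exp.mpr
    nlinarith [hthi, hc'0]
  rw [latticeVecNorm]
  apply (Real.sqrt_lt' (Real.exp_pos _)).mpr
  have hsum : ∑ i, (Real.exp (-(t:ℝ) / n) * (q i : ℝ)) ^ 2 ≤
      (n:ℝ) * Real.exp (-β * L) ^ 2 := by
    have := Finset.sum_le_card_nsmul Finset.univ
      (fun i => (Real.exp (-(t:ℝ) / n) * (q i : ℝ)) ^ 2) (Real.exp (-β * L) ^ 2)
      (fun i _ => hcoord i)
    simpa [Finset.card_univ, nsmul_eq_mul] using this
  have hcomb : (Real.exp (t:ℝ) * ((∑ i, y i * q i) + (p : ℝ))) ^ 2 +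
      ∑ i, (Real.exp (-(t:ℝ) / n) * (q i : ℝ)) ^ 2 < (C * Real.exp (-β * L)) ^ 2 := by
    have : (C * Real.exp (-β * L)) ^ 2 = (Real.exp 1 ^ 2 + n) * Real.exp (-β * L) ^ 2 := by
      rw [mul_pow, hCsq]
    rw [this]
    have h6 : (Real.exp 1 * Real.exp (-β * L)) ^ 2 = Real.exp 1 ^2 * Real.exp (-β*L)^2 := by
      ring
    nlinarith [hfirst, hsum]
  have hfin : (C * Real.exp (-β * L)) ^ 2 < Real.exp (-c' * t) ^ 2 := by
    apply pow_lt_pow_left₀ (lt_of_lt_of_le hmain hsecond) (by positivity) (by norm_num)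
  linarith

lemma QS_unbounded_of_TS {n : ℕ} (hn : 0 < n) {y : Fin n → ℝ}
    (hirr : ∀ q : Fin n → ℤ, q ≠ 0 → ∀ p : ℤ, (∑ i, y i * q i) + (p : ℝ) ≠ 0)
    {c : ℝ} (hc0 : 0 < c) (hc1 : c < 1 / n) (hT : (TS y c).Infinite) :
    ∀ B : ℝ, ∃ q ∈ QS y ((n : ℝ) * (1 + c) / (1 - n * c)), B < snormZ q := by
  intro B
  have hnpos : (0:ℝ) < n := by exact_mod_cast hn
  have h1nc : 0 < 1 - (n:ℝ) * c := by
    have h := (lt_div_iff₀ hnpos).mp hc1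
    linarith
  set v := (n : ℝ) * (1 + c) / (1 - n * c) with hv
  have hv0 : 0 < v := by rw [hv]; positivity
  have hvid : v * (1/(n:ℝ) - c) = 1 + c := by
    rw [hv]; field_simp
  obtain ⟨δ, hδ, hgap⟩ := gap_lemma hirr (max B 0)
  obtain ⟨m, hm⟩ := exists_nat_gt (max 1 (-Real.log δ / (1 + c)))
  obtain ⟨t, htmem, htm⟩ := hT.exists_gt m
  obtain ⟨p, q, hpq, hnorm⟩ := htmem
  have ht1 : (1:ℝ) ≤ t := by
    have h1 : (1:ℝ) < m := lt_of_le_of_lt (le_max_left _ _) hm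
    have h2 : (m:ℝ) < t := by exact_mod_cast htm
    linarith
  have hexp1 : Real.exp (-c * t) ≤ 1 := by
    rw [← Real.exp_zero]
    apply Real.exp_le_exp.mpr
    nlinarith
  have hq : q ≠ 0 := by
    rintro rfl
    have hp0 : p ≠ 0 := fun h => hpq ⟨h, rfl⟩
    rw [lvn_qzero] at hnorm
    have h1 : (1:ℝ) ≤ |(p:ℝ)| := by
      rw [← Int.cast_abs]; exact_mod_cast Int.one_le_abs hp0
    have h2 : (1:ℝ) < Real.exp (t:ℝ) := by
      rw [← Real.exp_zero]; exact Real.exp_lt_exp.mpr (by linarith)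
    nlinarith
  set N := snormZ q with hN
  have hN1 : 1 ≤ N := one_le_snormZ hq
  have hNbound : N ≤ Real.exp ((1/(n:ℝ) - c) * t) := by
    have h := lt_of_le_of_lt (snorm_le_lvn (t:ℝ) y p hq) hnorm
    have h2 := mul_lt_mul_of_pos_left h (Real.exp_pos ((t:ℝ)/n))
    rw [← mul_assoc, ← Real.exp_add, ← Real.exp_add,
      show (t:ℝ)/n + -(t:ℝ)/n = 0 by ring, Real.exp_zero, one_mul,
      show (t:ℝ)/n + -c*t = (1/(n:ℝ) - c) * t by ring] at h2
    exact h2.le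
  have hr : |(∑ i, y i * q i) + (p : ℝ)| < Real.exp (-(1+c) * t) := by
    have h := lt_of_le_of_lt (first_le_lvn (t:ℝ) y p q) hnorm
    have h2 := mul_lt_mul_of_pos_left h (Real.exp_pos (-(t:ℝ)))
    rw [← mul_assoc, ← Real.exp_add, ← Real.exp_add,
      show -(t:ℝ) + (t:ℝ) = 0 by ring, Real.exp_zero, one_mul,
      show -(t:ℝ) + -c*t = -(1+c) * t by ring] at h2
    exact h2
  have hmem : q ∈ QS y v := by
    refine ⟨p, lt_of_lt_of_le hr ?_⟩
    rw [Real.rpow_def_of_pos (by linarith : (0:ℝ) < N)]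
    apply Real.exp_le_exp.mpr
    have hlog : Real.log N ≤ (1/(n:ℝ) - c) * t := by
      calc Real.log N ≤ Real.log (Real.exp ((1/(n:ℝ) - c) * t)) :=
            Real.log_le_log (by linarith) hNbound
        _ = (1/(n:ℝ) - c) * t := Real.log_exp _
    have h3 : v * Real.log N ≤ v * ((1/(n:ℝ) - c) * t) :=
      mul_le_mul_of_nonneg_left hlog hv0.le
    rw [← mul_assoc, hvid] at h3
    nlinarith [h3]
  refine ⟨q, hmem, ?_⟩
  by_contra hcon
  push_neg at hcon
  have hle : N ≤ max B 0 := le_trans hcon (le_max_left _ _)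
  have hexp2 : Real.exp (-(1+c) * t) ≤ Real.exp (-(1+c) * m) := by
    apply Real.exp_le_exp.mpr
    have h2 : (m:ℝ) ≤ t := by exact_mod_cast htm.le
    nlinarith
  have hexp3 : Real.exp (-(1+c) * m) < δ := by
    have h1 : -Real.log δ / (1 + c) < m := lt_of_le_of_lt (le_max_right _ _) hm
    have h2 : -Real.log δ < (m:ℝ) * (1 + c) := (div_lt_iff₀ (by linarith)).mp h1
    rw [← Real.exp_log hδ]
    apply Real.exp_lt_exp.mpr
    linarith
  have hr1 : |(∑ i, y i * q i) + (p : ℝ)| < 1 := by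
    have : Real.exp (-(1+c) * t) ≤ 1 := Real.exp_le_one_iff.mpr (by nlinarith)
    linarith
  have := hgap q p hq hle hr1
  linarith

lemma alg1 {nr v₀ c'' : ℝ} (hnr : 0 < nr) (hv₀n : nr < v₀) (h1nc : 0 < 1 - nr * c'')
    (hcc : (v₀ - nr) / (nr * (v₀ + 1)) < c'') : v₀ * (1 - nr * c'') ≤ nr * (1 + c'') := by
  have hden : 0 < nr * (v₀ + 1) := by nlinarith
  have h2 : v₀ - nr < c'' * (nr * (v₀ + 1)) := (div_lt_iff₀ hden).mp hcc
  nlinarith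

/-- `ω(y) = n (1 + γ(y)) / (1 − n γ(y))` whenever `γ(y) < 1/n`. -/
theorem omega_eq_of_gamma {n : ℕ} (hn : 0 < n) (y : Fin n → ℝ)
    (hγ : gammaExp y < ENNReal.ofReal (1 / n)) :
    omegaExp y =
      ENNReal.ofReal ((n * (1 + (gammaExp y).toReal)) / (1 - n * (gammaExp y).toReal)) := by
  have hnpos : (0:ℝ) < n := by exact_mod_cast hn
  have hγtop : gammaExp y ≠ ⊤ := hγ.ne_top
  set γr := (gammaExp y).toReal with hγr
  have hγr0 : 0 ≤ γr := ENNReal.toReal_nonneg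
  have hγrlt : γr < 1 / n := (ENNReal.lt_ofReal_iff_toReal_lt hγtop).mp hγ
  have h1nγ : 0 < 1 - (n:ℝ) * γr := by
    have := (lt_div_iff₀ hnpos).mp hγrlt; linarith
  have hirr := hirr_of_gamma hn hγ
  set R := (n:ℝ) * (1 + γr) / (1 - n * γr) with hR
  clear_value γr
  have hRn : (n:ℝ) ≤ R := by
    rw [hR, le_div_iff₀ h1nγ]
    nlinarith [mul_nonneg hnpos.le hγr0, mul_nonneg (mul_nonneg hnpos.le hnpos.le) hγr0]
  apply le_antisymm
  · rw [omegaExp]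
    apply sSup_le
    rintro e ⟨v, rfl, hv0, hinf⟩
    apply ENNReal.ofReal_le_ofReal
    by_cases hvn : v ≤ n
    · linarith
    push_neg at hvn
    by_contra hcon
    push_neg at hcon
    have hcv : γr < (v - n) / (n * (v + 1)) := by
      rw [lt_div_iff₀ (by nlinarith)]
      have h2 : (n:ℝ) * (1 + γr) < v * (1 - n * γr) := by
        rw [hR] at hcon
        exact (div_lt_iff₀ h1nγ).mp hcon
      nlinarith
    have hpos2 : 0 < (v - n) / ((n:ℝ) * (v + 1)) := by
      apply div_pos <;> nlinarith
    set c' := (γr + (v - n) / ((n:ℝ) * (v + 1))) / 2 with hc'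
    have hc'0 : 0 < c' := by rw [hc']; linarith
    have hc'lt : c' < (v - n) / ((n:ℝ) * (v + 1)) := by rw [hc']; linarith
    have hTinf := TS_infinite_of_QS hn hvn hc'0 hc'lt hinf
    have h1 := le_gammaExp hTinf
    have h2 : gammaExp y < ENNReal.ofReal c' :=
      (ENNReal.lt_ofReal_iff_toReal_lt hγtop).mpr (by rw [hc', ← hγr]; linarith)
    exact absurd h1 (not_le.mpr h2)
  · rcases eq_or_lt_of_le hγr0 with h0 | hpos
    · have hReq : R = n := by rw [hR, ← h0]; simp
      rw [hReq]
      have hQinf : (QS y (n:ℝ)).Infinite :=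
        infinite_of_unbounded (dirichlet_unbounded hn hirr)
      exact le_omegaExp hnpos hQinf
    · by_contra hcon
      push_neg at hcon
      have hωtop : omegaExp y ≠ ⊤ := hcon.ne_top
      have hωR : (omegaExp y).toReal < R := (ENNReal.lt_ofReal_iff_toReal_lt hωtop).mp hcon
      have hnR : (n:ℝ) < R := by
        rw [hR, lt_div_iff₀ h1nγ]
        nlinarith [mul_pos hnpos hpos, mul_pos (mul_pos hnpos hnpos) hpos]
      set M := max (omegaExp y).toReal (n:ℝ) with hM
      have hMR : M < R := max_lt hωR hnR
      have hMn : (n:ℝ) ≤ M := le_max_right _ _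
      have hMω : (omegaExp y).toReal ≤ M := le_max_left _ _
      clear_value M
      set v₀ := (M + R) / 2 with hv₀
      have hv₀M : M < v₀ := by rw [hv₀]; linarith
      have hv₀R : v₀ < R := by rw [hv₀]; linarith
      have hv₀n : (n:ℝ) < v₀ := lt_of_le_of_lt hMn hv₀M
      have hv₀ω : (omegaExp y).toReal < v₀ := lt_of_le_of_lt hMω hv₀M
      clear_value v₀
      set c := (v₀ - n) / ((n:ℝ) * (v₀ + 1)) with hc
      clear_value c
      have hc0 : 0 < c := by rw [hc]; apply div_pos <;> nlinarith
      have hcγ : c < γr := by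
        rw [hc, div_lt_iff₀ (by nlinarith)]
        have h2 : v₀ * (1 - n * γr) < (n:ℝ) * (1 + γr) := by
          rw [hR] at hv₀R
          exact (lt_div_iff₀ h1nγ).mp hv₀R
        nlinarith
      have hgam : ENNReal.ofReal c < gammaExp y := by
        have h1 : ENNReal.ofReal c < ENNReal.ofReal γr :=
          (ENNReal.ofReal_lt_ofReal_iff hpos).mpr hcγ
        rwa [hγr, ENNReal.ofReal_toReal hγtop] at h1
      rw [gammaExp] at hgam
      obtain ⟨e, he, hlt⟩ := lt_sSup_iff.mp hgam
      obtain ⟨c'', rfl, hTinf⟩ := he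
      have hc''0 : 0 < c'' := by
        by_contra h
        push_neg at h
        rw [ENNReal.ofReal_eq_zero.mpr h] at hlt
        exact absurd hlt (not_lt.mpr zero_le)
      have hcc'' : c < c'' := by
        by_contra h
        push_neg at h
        exact absurd hlt (not_lt.mpr (ENNReal.ofReal_le_ofReal h))
      have hc''γ : c'' ≤ γr := by
        have h1 : ENNReal.ofReal c'' ≤ gammaExp y := le_gammaExp hTinf
        have h2 : ENNReal.ofReal c'' ≤ ENNReal.ofReal γr := by
          rw [hγr, ENNReal.ofReal_toReal hγtop]; exact h1
        exact (ENNReal.ofReal_le_ofReal_iff hγr0).mp h2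
      have hc''1 : c'' < 1 / n := lt_of_le_of_lt hc''γ hγrlt
      have h1nc'' : 0 < 1 - (n:ℝ) * c'' := by
        have := (lt_div_iff₀ hnpos).mp hc''1; linarith
      have hQinf : (QS y ((n:ℝ) * (1 + c'') / (1 - n * c''))).Infinite :=
        infinite_of_unbounded (QS_unbounded_of_TS hn hirr hc''0 hc''1 hTinf)
      have hfpos : 0 < (n:ℝ) * (1 + c'') / (1 - n * c'') := by
        apply div_pos _ h1nc''; nlinarith
      have hω2 := le_omegaExp hfpos hQinf
      have hv₀f : v₀ ≤ (n:ℝ) * (1 + c'') / (1 - n * c'') := by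
        rw [le_div_iff₀ h1nc'']
        rw [hc] at hcc''
        exact alg1 hnpos hv₀n h1nc'' hcc'' 
      have hfinal : ENNReal.ofReal v₀ ≤ omegaExp y :=
        le_trans (ENNReal.ofReal_le_ofReal hv₀f) hω2
      have hlast : omegaExp y < ENNReal.ofReal v₀ :=
        (ENNReal.lt_ofReal_iff_toReal_lt hωtop).mpr hv₀ω
      exact absurd hfinal (not_le.mpr hlast)
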